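/- Let n ≥ 2 and let W be an n×n real symmetric matrix with all entries satisfying 0 < W_{ij} < 1, and let γ be a real number with γ > 4·max{ ρ(W), (∑_{i,j} W_{ij}) / (min_{i,j} W_{ij}) }, where ρ(W) is the spectral radius of W. Then W + γI is invertible, every off-diagonal entry of (W + γI)⁻¹ is negative, and every entry of the vector (W + γI)⁻¹·1 (where 1 is the all-ones vector) is at least 2/(3γ) > 0. -/

import Mathlib

open Matrix

/-- In the proof of Theorem 4: for symmetric `W` with entries in `(0,1)` and
`γ > 4·max{ρ(W), (∑ᵢⱼ Wᵢⱼ)/minᵢⱼ Wᵢⱼ}`, the matrix `W + γI` is invertible, the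
off-diagonal entries of `(W + γI)⁻¹` are negative, and each entry of `(W + γI)⁻¹·1`
is at least `2/(3γ) > 0`. -/
theorem binary_pricing_reduction_matrix
    (n : ℕ) (hn : 2 ≤ n) (W : Matrix (Fin n) (Fin n) ℝ) (hWs : W.IsSymm)
    (hW : ∀ i j, 0 < W i j ∧ W i j < 1)
    (ρ m γ : ℝ)
    (hρ : IsGreatest ((fun μ => |μ|) '' spectrum ℝ W) ρ)
    (hm : IsLeast {r : ℝ | ∃ i j, W i j = r} m)
    (hγ : γ > 4 * max ρ ((∑ i, ∑ j, W i j) / m)) :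
    IsUnit (W + γ • (1 : Matrix (Fin n) (Fin n) ℝ)) ∧
    (∀ i j, i ≠ j → (W + γ • (1 : Matrix (Fin n) (Fin n) ℝ))⁻¹ i j < 0) ∧
    (∀ i, ((W + γ • (1 : Matrix (Fin n) (Fin n) ℝ))⁻¹ *ᵥ (1 : Fin n → ℝ)) i ≥ 2 / (3 * γ)) ∧
    0 < 2 / (3 * γ) := by
  have hn0 : 0 < n := by omega
  haveI : Nonempty (Fin n) := ⟨⟨0, hn0⟩⟩
  obtain ⟨⟨i₀, j₀, hij₀⟩, hmle⟩ := hm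
  have hm0 : 0 < m := hij₀ ▸ (hW i₀ j₀).1
  have hm1 : m < 1 := hij₀ ▸ (hW i₀ j₀).2
  have hmle : ∀ i j, m ≤ W i j := fun i j => hmle ⟨i, j, rfl⟩
  set T : ℝ := ∑ i, ∑ j, W i j with hTdef
  have hT0 : 0 < T :=
    Finset.sum_pos (fun i _ => Finset.sum_pos (fun j _ => (hW i j).1) Finset.univ_nonempty)
      Finset.univ_nonempty
  have hγ' : 4 * (T / m) < γ :=
    lt_of_le_of_lt (by gcongr; exact le_max_right _ _) hγ
  have hγ0 : 0 < γ := lt_trans (by positivity) hγ'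
  have hγm : 4 * T < γ * m := by
    have := (mul_lt_mul_iff_of_pos_right hm0).mpr hγ'
    rw [mul_assoc, div_mul_cancel₀ _ hm0.ne'] at this
    linarith
  have hγT : 4 * T < γ := by nlinarith
  have hrow : ∀ k, (∑ p, W k p) ≤ T := by
    intro k
    exact Finset.single_le_sum (f := fun i => ∑ p, W i p)
      (fun i _ => Finset.sum_nonneg fun p _ => (hW i p).1.le) (Finset.mem_univ k)
  have hrow2 : ∀ p j, (∑ k, W p k * W k j) ≤ T := by
    intro p j
    refine le_trans (Finset.sum_le_sum fun k _ => ?_) (hrow p)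
    nlinarith [(hW p k).1, (hW k j).2, (hW k j).1]
  set A := W + γ • (1 : Matrix (Fin n) (Fin n) ℝ) with hAdef
  have hAentry : ∀ i j, A i j = W i j + γ * (if i = j then 1 else 0) := by
    intro i j; simp [hAdef, Matrix.one_apply]
  have hdet : A.det ≠ 0 := by
    apply det_ne_zero_of_sum_row_lt_diag
    intro k
    have h1 : ∑ j ∈ Finset.univ.erase k, ‖A k j‖ = ∑ j ∈ Finset.univ.erase k, W k j := by
      refine Finset.sum_congr rfl fun j hj => ?_
      have hjk : k ≠ j := fun h => (Finset.mem_erase.mp hj).1 h.symm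
      rw [hAentry, if_neg hjk, Real.norm_eq_abs]
      simp [abs_of_pos (hW k j).1]
    have h2 : ∑ j ∈ Finset.univ.erase k, W k j ≤ ∑ j, W k j :=
      Finset.sum_le_sum_of_subset_of_nonneg (Finset.erase_subset _ _)
        (fun j _ _ => (hW k j).1.le)
    have h3 : ‖A k k‖ = W k k + γ := by
      rw [hAentry, if_pos rfl, Real.norm_eq_abs, mul_one]
      exact abs_of_pos (by nlinarith [(hW k k).1])
    rw [h1, h3]
    have := hrow k
    nlinarith [(hW k k).1]
  have hdu : IsUnit A.det := isUnit_iff_ne_zero.mpr hdet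
  have hAu : IsUnit A := (Matrix.isUnit_iff_isUnit_det A).mpr hdu
  have hBA : A⁻¹ * A = 1 := Matrix.nonsing_inv_mul A hdu
  -- key identity
  have key : ∀ i p, γ * A⁻¹ i p = (if i = p then (1:ℝ) else 0) - ∑ k, A⁻¹ i k * W k p := by
    intro i p
    have h := congrFun (congrFun hBA i) p
    rw [Matrix.mul_apply] at h
    have h2 : ∀ k, A⁻¹ i k * A k p
        = A⁻¹ i k * W k p + γ * (if k = p then A⁻¹ i k else 0) := by
      intro k; rw [hAentry]; split <;> ring
    rw [Finset.sum_congr rfl (fun k _ => h2 k), Finset.sum_add_distrib] at h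
    rw [← Finset.mul_sum, Finset.sum_ite_eq' Finset.univ p (fun k => A⁻¹ i k)] at h
    simp only [Finset.mem_univ, if_true, Matrix.one_apply] at h
    linarith [h]
  -- absolute row sums
  set M : Fin n → ℝ := fun i => ∑ p, |A⁻¹ i p| with hMdef
  have hM0 : ∀ i, 0 ≤ M i := fun i => Finset.sum_nonneg fun p _ => abs_nonneg _
  have hM1 : ∀ i, γ * M i ≤ 1 + T * M i := by
    intro i
    have h1 : γ * M i = ∑ p, |γ * A⁻¹ i p| := by
      rw [hMdef, Finset.mul_sum]
      refine Finset.sum_congr rfl fun p _ => ?_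
      rw [abs_mul, abs_of_nonneg hγ0.le]
    have h2 : ∀ p, |γ * A⁻¹ i p| ≤
        (if i = p then (1:ℝ) else 0) + ∑ k, |A⁻¹ i k| * W k p := by
      intro p
      rw [key i p]
      refine (abs_sub _ _).trans (add_le_add ?_ ?_)
      · split <;> simp
      · refine (Finset.abs_sum_le_sum_abs _ _).trans (Finset.sum_le_sum fun k _ => ?_)
        rw [abs_mul, abs_of_pos (hW k p).1]
    calc γ * M i = ∑ p, |γ * A⁻¹ i p| := h1
      _ ≤ ∑ p, ((if i = p then (1:ℝ) else 0) + ∑ k, |A⁻¹ i k| * W k p) :=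
          Finset.sum_le_sum fun p _ => h2 p
      _ = 1 + ∑ k, |A⁻¹ i k| * ∑ p, W k p := by
          rw [Finset.sum_add_distrib, Finset.sum_ite_eq Finset.univ i (fun _ => (1:ℝ))]
          simp only [Finset.mem_univ, if_true]
          rw [Finset.sum_comm]
          congr 1
          exact Finset.sum_congr rfl fun k _ => (Finset.mul_sum _ _ _).symm
      _ ≤ 1 + ∑ k, |A⁻¹ i k| * T := by
          refine add_le_add le_rfl (Finset.sum_le_sum fun k _ => ?_)
          exact mul_le_mul_of_nonneg_left (hrow k) (abs_nonneg _)
      _ = 1 + T * M i := by rw [← Finset.sum_mul, hMdef]; ring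
  have hM : ∀ i, M i ≤ 4 / (3 * γ) := by
    intro i
    rw [le_div_iff₀ (by positivity)]
    nlinarith [hM1 i, hM0 i]
  have hMT : ∀ i, T * M i ≤ m / 3 := by
    intro i
    calc T * M i ≤ T * (4 / (3 * γ)) := by
          exact mul_le_mul_of_nonneg_left (hM i) hT0.le
      _ = (4 * T) / (3 * γ) := by ring
      _ ≤ m / 3 := by
          rw [div_le_div_iff₀ (by positivity) (by norm_num : (0:ℝ) < 3)]
          nlinarith
  -- bound on weighted sums of a row of A⁻¹
  have hws : ∀ (i : Fin n) (c : Fin n → ℝ), (∀ p, 0 ≤ c p) → (∀ p, c p ≤ T) →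
      |∑ p, A⁻¹ i p * c p| ≤ m / 3 := by
    intro i c hc0 hcT
    refine le_trans ?_ (hMT i)
    refine (Finset.abs_sum_le_sum_abs _ _).trans ?_
    calc ∑ p, |A⁻¹ i p * c p| ≤ ∑ p, |A⁻¹ i p| * T := by
          refine Finset.sum_le_sum fun p _ => ?_
          rw [abs_mul, abs_of_nonneg (hc0 p)]
          exact mul_le_mul_of_nonneg_left (hcT p) (abs_nonneg _)
      _ = T * M i := by rw [← Finset.sum_mul, hMdef]; ring
  refine ⟨hAu, ?_, ?_, by positivity⟩
  · -- off-diagonal entries negative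
    intro i j hij
    have key2 : γ^2 * A⁻¹ i j = -(W i j) + ∑ p, A⁻¹ i p * (∑ k, W p k * W k j) := by
      have h := key i j
      rw [if_neg hij, zero_sub] at h
      have hstep : ∀ k, γ * (A⁻¹ i k * W k j)
          = (if i = k then (1:ℝ) else 0) * W k j - (∑ p, A⁻¹ i p * W p k) * W k j := by
        intro k
        have := key i k
        calc γ * (A⁻¹ i k * W k j) = (γ * A⁻¹ i k) * W k j := by ring
          _ = ((if i = k then (1:ℝ) else 0) - ∑ p, A⁻¹ i p * W p k) * W k j := by rw [this]
          _ = _ := by ring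
      have hA2 : γ^2 * A⁻¹ i j = γ * (γ * A⁻¹ i j) := by ring
      rw [hA2, h, mul_neg, Finset.mul_sum]
      rw [Finset.sum_congr rfl (fun k _ => hstep k), Finset.sum_sub_distrib]
      have e1 : ∑ x, (if i = x then (1:ℝ) else 0) * W x j = W i j := by
        simp only [ite_mul, one_mul, zero_mul]
        rw [Finset.sum_ite_eq Finset.univ i (fun x => W x j)]
        simp
      have e2 : ∑ x, (∑ p, A⁻¹ i p * W p x) * W x j
          = ∑ p, A⁻¹ i p * ∑ k, W p k * W k j := by
        simp only [Finset.sum_mul]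
        rw [Finset.sum_comm]
        refine Finset.sum_congr rfl fun p _ => ?_
        rw [Finset.mul_sum]
        exact Finset.sum_congr rfl fun x _ => by ring
      rw [neg_sub, e1, e2]
      ring
    have hb := hws i (fun p => ∑ k, W p k * W k j)
      (fun p => Finset.sum_nonneg fun k _ => mul_nonneg (hW p k).1.le (hW k j).1.le)
      (fun p => hrow2 p j)
    have hW' := hmle i j
    have : γ^2 * A⁻¹ i j < 0 := by
      rw [key2]
      have := abs_le.mp hb
      linarith
    nlinarith [sq_nonneg γ]
  · -- entries of A⁻¹ *ᵥ 1
    intro i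
    have hmv : (A⁻¹ *ᵥ (1 : Fin n → ℝ)) i = ∑ p, A⁻¹ i p := by
      simp [Matrix.mulVec, dotProduct]
    have hsum : γ * (∑ p, A⁻¹ i p) = 1 - ∑ k, A⁻¹ i k * ∑ p, W k p := by
      rw [Finset.mul_sum, Finset.sum_congr rfl (fun p (_ : p ∈ Finset.univ) => key i p)]
      rw [Finset.sum_sub_distrib]
      rw [Finset.sum_ite_eq Finset.univ i (fun _ => (1:ℝ))]
      simp only [Finset.mem_univ, if_true]
      congr 1
      rw [Finset.sum_comm]
      exact Finset.sum_congr rfl fun k _ => (Finset.mul_sum _ _ _).symm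
    have hb := hws i (fun k => ∑ p, W k p)
      (fun k => Finset.sum_nonneg fun p _ => (hW k p).1.le) (fun k => hrow k)
    have habs := abs_le.mp hb
    rw [hmv, ge_iff_le, div_le_iff₀ (by positivity)]
    nlinarith [habs.1, habs.2]
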